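/- Let P be an m-dimensional convex polytope in R^q and let v_1,...,v_n be the vertices of a special simplex in P (i.e., each facet of P contains exactly n-1 of the vertices v_1,...,v_n). If F is a face of P of codimension k for some 1 ≤ k ≤ n-1 and F does not contain any of v_1,...,v_k, then F contains v_i for all k+1 ≤ i ≤ n. -/

import Mathlib

/-- The dimension of a subset of `ι → ℝ`, as the rank of its vector span. -/
noncomputable def pdim {ι : Type*} (S : Set (ι → ℝ)) : ℕ :=
  Module.finrank ℝ (vectorSpan ℝ S)

/-- `F` is a face of the polytope `P`: either `P` itself or the set of points of `P`
where some linear functional bounded above on `P` attains its maximum value. -/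
def IsFaceOf {ι : Type*} (F P : Set (ι → ℝ)) : Prop :=
  F = P ∨ ∃ (f : (ι → ℝ) →ₗ[ℝ] ℝ) (c : ℝ), (∀ x ∈ P, f x ≤ c) ∧ F = {x ∈ P | f x = c}

/-- `F` is a facet of `P`: a nonempty proper face of codimension one. -/
def IsFacetOf {ι : Type*} (F P : Set (ι → ℝ)) : Prop :=
  IsFaceOf F P ∧ F.Nonempty ∧ F ≠ P ∧ pdim F + 1 = pdim P

set_option maxHeartbeats 1000000
set_option synthInstance.maxHeartbeats 400000

open Module Set

namespace SpecialAux

variable {q : ℕ}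

/-- bound on the hull from bound on generators -/
lemma hull_le {S : Set (Fin q → ℝ)} (f : (Fin q → ℝ) →ₗ[ℝ] ℝ) (c : ℝ)
    (h : ∀ u ∈ S, f u ≤ c) : ∀ x ∈ convexHull ℝ S, f x ≤ c := by
  have : S ⊆ {x | f x ≤ c} := h
  have := convexHull_min this (convex_halfSpace_le f.isLinear c)
  exact this

lemma faceSubset {F P : Set (Fin q → ℝ)} (h : IsFaceOf F P) : F ⊆ P := by
  rcases h with h | ⟨f, c, hb, rfl⟩
  · exact h.le
  · exact sep_subset _ _

lemma faceRefl (P : Set (Fin q → ℝ)) : IsFaceOf P P := Or.inl rfl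

lemma faceInter {F G P : Set (Fin q → ℝ)} (hF : IsFaceOf F P) (hG : IsFaceOf G P) :
    IsFaceOf (F ∩ G) P := by
  rcases hF with rfl | ⟨f, c, hfb, rfl⟩
  · rwa [Set.inter_eq_right.2 (faceSubset hG)]
  · rcases hG with rfl | ⟨g, d, hgb, rfl⟩
    · rw [Set.inter_eq_left.2 (sep_subset _ _)]
      exact Or.inr ⟨f, c, hfb, rfl⟩
    · refine Or.inr ⟨f + g, c + d, fun x hx => by
        have := hfb x hx; have := hgb x hx; simp only [LinearMap.add_apply]; linarith, ?_⟩
      ext x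
      constructor
      · rintro ⟨⟨hx, hfx⟩, ⟨-, hgx⟩⟩
        exact ⟨hx, by simp [hfx, hgx]⟩
      · rintro ⟨hx, hfg⟩
        have h1 := hfb x hx; have h2 := hgb x hx
        simp only [LinearMap.add_apply] at hfg
        exact ⟨⟨hx, by linarith⟩, ⟨hx, by linarith⟩⟩

lemma pdim_convexHull (S : Set (Fin q → ℝ)) : pdim (convexHull ℝ S) = pdim S := by
  unfold pdim
  rw [← direction_affineSpan, ← direction_affineSpan ℝ S, affineSpan_convexHull]

lemma pdim_mono {S T : Set (Fin q → ℝ)} (h : S ⊆ T) : pdim S ≤ pdim T :=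
  Submodule.finrank_mono (vectorSpan_mono ℝ h)

/-- The hyperplane `{x | f x = c}` as an affine subspace. -/
noncomputable def hyp (f : (Fin q → ℝ) →ₗ[ℝ] ℝ) (c : ℝ) : AffineSubspace ℝ (Fin q → ℝ) where
  carrier := {x | f x = c}
  smul_vsub_vadd_mem' := by
    intro t p1 p2 p3 h1 h2 h3
    simp only [Set.mem_setOf_eq] at *
    simp [vsub_eq_sub, vadd_eq_add, map_add, map_sub, map_smul, h1, h2, h3]

/-- strict pdim monotonicity for faces -/
lemma pdim_lt_of_face_ssubset {P F G : Set (Fin q → ℝ)} (hF : IsFaceOf F P) (hG : IsFaceOf G P)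
    (hFG : F ⊆ G) (hne : F.Nonempty) (hneq : F ≠ G) : pdim F < pdim G := by
  by_contra hlt
  push_neg at hlt
  apply hneq
  rcases hF with rfl | ⟨f, c, hfb, hFdef⟩
  · exact (subset_antisymm hFG (faceSubset hG)).symm ▸ rfl
  · -- vectorSpan F = vectorSpan G
    have hVS : vectorSpan ℝ F = vectorSpan ℝ G := by
      refine Submodule.eq_of_le_of_finrank_le (vectorSpan_mono ℝ hFG) hlt
    have hAS : affineSpan ℝ F = affineSpan ℝ G := by
      apply AffineSubspace.ext_of_direction_eq
      · rw [direction_affineSpan, direction_affineSpan, hVS]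
      · obtain ⟨x0, hx0⟩ := hne
        exact ⟨x0, subset_affineSpan ℝ F hx0, subset_affineSpan ℝ G (hFG hx0)⟩
    apply subset_antisymm hFG
    intro x hx
    have hxspan : x ∈ affineSpan ℝ F := hAS ▸ subset_affineSpan ℝ G hx
    have hFhyp : F ⊆ (hyp f c : Set (Fin q → ℝ)) := by
      intro y hy; rw [hFdef] at hy; exact hy.2
    have : affineSpan ℝ F ≤ hyp f c := affineSpan_le.2 hFhyp
    have hfx : f x = c := this hxspan
    rw [hFdef]
    exact ⟨faceSubset hG hx, hfx⟩

open Classical in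
/-- A face of a polytope is the convex hull of the vertices on it. -/
lemma face_hull (V : Finset (Fin q → ℝ)) (f : (Fin q → ℝ) →ₗ[ℝ] ℝ) (c : ℝ)
    (hfV : ∀ u ∈ V, f u ≤ c) :
    {x ∈ convexHull ℝ (V : Set (Fin q → ℝ)) | f x = c} =
      convexHull ℝ ((V.filter fun u => f u = c : Finset (Fin q → ℝ)) : Set (Fin q → ℝ)) := by
  apply subset_antisymm
  · rintro x ⟨hx, hfx⟩
    rw [Finset.convexHull_eq] at hx
    obtain ⟨w, hw0, hw1, hwx⟩ := hx
    rw [Finset.centerMass_eq_of_sum_1 _ _ hw1] at hwx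
    have hfx' : ∑ u ∈ V, w u * f u = c := by
      have : f x = ∑ u ∈ V, w u * f u := by
        rw [← hwx, map_sum]
        simp [smul_eq_mul]
      rw [← this, hfx]
    have hzero : ∀ u ∈ V, w u * (c - f u) = 0 := by
      rw [← Finset.sum_eq_zero_iff_of_nonneg]
      · have : ∑ u ∈ V, w u * (c - f u) = (∑ u ∈ V, w u) * c - ∑ u ∈ V, w u * f u := by
          rw [Finset.sum_mul, ← Finset.sum_sub_distrib]
          congr 1; ext u; ring
        rw [this, hw1, hfx']; ring
      · intro u hu
        exact mul_nonneg (hw0 u hu) (by linarith [hfV u hu])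
    have hkey : ∀ u ∈ V, w u ≠ 0 → f u = c := by
      intro u hu hwu
      have := hzero u hu
      rcases mul_eq_zero.1 this with h | h
      · exact absurd h hwu
      · linarith
    rw [Finset.convexHull_eq]
    refine ⟨w, fun y hy => hw0 y (Finset.filter_subset _ _ hy), ?_, ?_⟩
    · rw [← hw1]
      apply Finset.sum_subset (Finset.filter_subset _ _)
      intro u hu hnu
      by_contra hwu
      exact hnu (Finset.mem_filter.2 ⟨hu, hkey u hu hwu⟩)
    · rw [Finset.centerMass_eq_of_sum_1]
      · rw [← hwx]
        apply Finset.sum_subset (Finset.filter_subset _ _)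
        intro u hu hnu
        have : w u = 0 := by
          by_contra hwu
          exact hnu (Finset.mem_filter.2 ⟨hu, hkey u hu hwu⟩)
        simp [this]
      · rw [← hw1]
        apply Finset.sum_subset (Finset.filter_subset _ _)
        intro u hu hnu
        by_contra hwu
        exact hnu (Finset.mem_filter.2 ⟨hu, hkey u hu hwu⟩)
  · intro y hy
    constructor
    · exact convexHull_mono (by exact_mod_cast Finset.filter_subset _ _) hy
    · have : (↑(V.filter fun u => f u = c) : Set (Fin q → ℝ)) ⊆ {x | f x = c} := by
        intro u hu
        simp only [Finset.coe_filter, Set.mem_setOf_eq] at hu ⊢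
        exact hu.2
      exact convexHull_min this (convex_hyperplane f.isLinear c) hy
lemma funcs (DA DV : Submodule ℝ (Fin q → ℝ)) (hle : DA ≤ DV)
    (h2 : finrank ℝ DA + 2 ≤ finrank ℝ DV) :
    ∃ ℓ0 ℓ1 : (Fin q → ℝ) →ₗ[ℝ] ℝ,
      (∀ x ∈ DA, ℓ0 x = 0) ∧ (∀ x ∈ DA, ℓ1 x = 0) ∧
      ∀ α β : ℝ, (α ≠ 0 ∨ β ≠ 0) → ∃ x ∈ DV, α * ℓ0 x + β * ℓ1 x ≠ 0 := by
  set DA' : Submodule ℝ DV := DA.comap DV.subtype with hDA'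
  have hrkA : finrank ℝ DA' = finrank ℝ DA :=
    (Submodule.comapSubtypeEquivOfLe hle).finrank_eq
  obtain ⟨C, hC⟩ := Submodule.exists_isCompl DA'
  have hrk : finrank ℝ DA' + finrank ℝ C = finrank ℝ DV :=
    Submodule.finrank_add_eq_of_isCompl hC
  have h2C : 2 ≤ finrank ℝ C := by omega
  haveI : Module.Free ℝ C := Module.Free.of_divisionRing ℝ C
  set b : Basis (Fin (finrank ℝ C)) ℝ C := Module.finBasis ℝ C with hb
  have hne01 : (⟨0, by omega⟩ : Fin (finrank ℝ C)) ≠ ⟨1, by omega⟩ := by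
    simp [Fin.ext_iff]
  set i0 : Fin (finrank ℝ C) := ⟨0, by omega⟩
  set i1 : Fin (finrank ℝ C) := ⟨1, by omega⟩
  set ρ : DV →ₗ[ℝ] C := C.linearProjOfIsCompl DA' hC.symm with hρ
  obtain ⟨D, hD⟩ := Submodule.exists_isCompl DV
  set π : (Fin q → ℝ) →ₗ[ℝ] DV := DV.linearProjOfIsCompl D hD with hπ
  refine ⟨(b.coord i0).comp (ρ.comp π), (b.coord i1).comp (ρ.comp π), ?_, ?_, ?_⟩
  · intro x hx
    have h1 : π x = ⟨x, hle hx⟩ := Submodule.linearProjOfIsCompl_apply_left hD ⟨x, hle hx⟩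
    have h2 : ρ ⟨x, hle hx⟩ = 0 := Submodule.linearProjOfIsCompl_apply_right hC.symm ⟨⟨x, hle hx⟩, hx⟩
    simp [h1, h2]
  · intro x hx
    have h1 : π x = ⟨x, hle hx⟩ := Submodule.linearProjOfIsCompl_apply_left hD ⟨x, hle hx⟩
    have h2 : ρ ⟨x, hle hx⟩ = 0 := Submodule.linearProjOfIsCompl_apply_right hC.symm ⟨⟨x, hle hx⟩, hx⟩
    simp [h1, h2]
  · intro α β hab
    have key : ∀ j : Fin (finrank ℝ C),
        ∀ i : Fin (finrank ℝ C),
        (b.coord i).comp (ρ.comp π) ((((b j : C) : DV) : Fin q → ℝ)) = if j = i then 1 else 0 := by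
      intro j i
      have h1 : π (((b j : C) : DV) : Fin q → ℝ) = ((b j : C) : DV) :=
        Submodule.linearProjOfIsCompl_apply_left hD ((b j : C) : DV)
      have h2 : ρ ((b j : C) : DV) = b j :=
        Submodule.linearProjOfIsCompl_apply_left hC.symm (b j)
      simp only [LinearMap.comp_apply, h1, h2, Basis.coord_apply, Basis.repr_self]
      rw [Finsupp.single_apply]
    rcases hab with hα | hβ
    · refine ⟨(((b i0 : C) : DV) : Fin q → ℝ), ((b i0 : C) : DV).2, ?_⟩
      rw [key i0 i0, key i0 i1]
      simp [if_pos rfl, if_neg hne01, hα]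
    · refine ⟨(((b i1 : C) : DV) : Fin q → ℝ), ((b i1 : C) : DV).2, ?_⟩
      rw [key i1 i0, key i1 i1]
      simp [if_neg (Ne.symm hne01), hβ]
/-- Rotation: tilt a supporting functional until it captures a new vertex. -/
lemma rot (V : Finset (Fin q → ℝ)) (f ℓ : (Fin q → ℝ) →ₗ[ℝ] ℝ) (c : ℝ) (a0 : Fin q → ℝ)
    (hfV : ∀ u ∈ V, f u ≤ c)
    (hvanA : ∀ u ∈ V, f u = c → ℓ (u - a0) = 0)
    (hpos : ∃ u ∈ V, 0 < ℓ (u - a0)) :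
    ∃ t : ℝ, 0 < t ∧ (∀ u ∈ V, f u + t * ℓ (u - a0) ≤ c) ∧
      ∃ u' ∈ V, 0 < ℓ (u' - a0) ∧ f u' + t * ℓ (u' - a0) = c := by
  classical
  set S := V.filter (fun u => 0 < ℓ (u - a0)) with hS
  have hSne : S.Nonempty := by
    obtain ⟨u, hu, hℓu⟩ := hpos
    exact ⟨u, Finset.mem_filter.2 ⟨hu, hℓu⟩⟩
  set t := S.inf' hSne (fun u => (c - f u) / ℓ (u - a0)) with ht
  have htpos : 0 < t := by
    rw [ht, Finset.lt_inf'_iff]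
    intro u hu
    obtain ⟨huV, hℓu⟩ := Finset.mem_filter.1 hu
    have hfu : f u < c := by
      rcases lt_or_eq_of_le (hfV u huV) with h | h
      · exact h
      · exact absurd (hvanA u huV h) (ne_of_gt hℓu)
    exact div_pos (by linarith) hℓu
  refine ⟨t, htpos, ?_, ?_⟩
  · intro u huV
    rcases le_or_gt (ℓ (u - a0)) 0 with h | h
    · have : t * ℓ (u - a0) ≤ 0 := mul_nonpos_of_nonneg_of_nonpos htpos.le h
      linarith [hfV u huV]
    · have huS : u ∈ S := Finset.mem_filter.2 ⟨huV, h⟩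
      have : t ≤ (c - f u) / ℓ (u - a0) := Finset.inf'_le _ huS
      have := (le_div_iff₀ h).1 this
      linarith
  · obtain ⟨u', hu'S, hu'⟩ := Finset.exists_mem_eq_inf' hSne (fun u => (c - f u) / ℓ (u - a0))
    obtain ⟨hu'V, hℓu'⟩ := Finset.mem_filter.1 hu'S
    refine ⟨u', hu'V, hℓu', ?_⟩
    rw [← ht] at hu'
    rw [hu', div_mul_cancel₀ _ (ne_of_gt hℓu')]
    ring
/-- Goal of the splitting lemmas. -/
def SplitGoal (V : Finset (Fin q → ℝ)) (f : (Fin q → ℝ) →ₗ[ℝ] ℝ) (c : ℝ) : Prop :=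
  ∃ F1 F2 : Set (Fin q → ℝ),
    IsFaceOf F1 (convexHull ℝ (V : Set (Fin q → ℝ))) ∧
    IsFaceOf F2 (convexHull ℝ (V : Set (Fin q → ℝ))) ∧
    {x ∈ convexHull ℝ (V : Set (Fin q → ℝ)) | f x = c} ⊆ F1 ∧
    {x ∈ convexHull ℝ (V : Set (Fin q → ℝ)) | f x = c} ⊆ F2 ∧
    {x ∈ convexHull ℝ (V : Set (Fin q → ℝ)) | f x = c} ≠ F1 ∧
    {x ∈ convexHull ℝ (V : Set (Fin q → ℝ)) | f x = c} ≠ F2 ∧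
    F1 ∩ F2 = {x ∈ convexHull ℝ (V : Set (Fin q → ℝ)) | f x = c}

/-- The rotated face as a face of `P`, with its key properties. -/
lemma rot_face (V : Finset (Fin q → ℝ)) (f ℓ : (Fin q → ℝ) →ₗ[ℝ] ℝ) (c : ℝ) (a0 : Fin q → ℝ)
    (hfV : ∀ u ∈ (V : Set (Fin q → ℝ)), f u ≤ c)
    (hvanF : ∀ x ∈ {x ∈ convexHull ℝ (V : Set (Fin q → ℝ)) | f x = c}, ℓ (x - a0) = 0)
    (hvanA : ∀ u ∈ V, f u = c → ℓ (u - a0) = 0)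
    (hpos : ∃ u ∈ V, 0 < ℓ (u - a0)) :
    ∃ (F1 : Set (Fin q → ℝ)) (t : ℝ), 0 < t ∧
      IsFaceOf F1 (convexHull ℝ (V : Set (Fin q → ℝ))) ∧
      (∀ x, x ∈ F1 ↔ x ∈ convexHull ℝ (V : Set (Fin q → ℝ)) ∧ f x + t * ℓ (x - a0) = c) ∧
      {x ∈ convexHull ℝ (V : Set (Fin q → ℝ)) | f x = c} ⊆ F1 ∧
      {x ∈ convexHull ℝ (V : Set (Fin q → ℝ)) | f x = c} ≠ F1 := by
  obtain ⟨t, htpos, hbV, u', hu'V, hℓu', hequ'⟩ := rot V f ℓ c a0 (fun u hu => hfV u hu) hvanA hpos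
  set P := convexHull ℝ (V : Set (Fin q → ℝ)) with hP
  set F := {x ∈ P | f x = c} with hF
  set g : (Fin q → ℝ) →ₗ[ℝ] ℝ := f + t • ℓ with hg
  set cg : ℝ := c + t * ℓ a0 with hcg
  have hmem : ∀ x, g x = cg ↔ f x + t * ℓ (x - a0) = c := by
    intro x
    rw [hg, hcg]
    simp only [LinearMap.add_apply, LinearMap.smul_apply, smul_eq_mul, map_sub]
    constructor <;> intro h <;> nlinarith [h]
  have hgb : ∀ u ∈ (V : Set (Fin q → ℝ)), g u ≤ cg := by
    intro u hu
    rw [← sub_nonneg]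
    have := hbV u hu
    rw [hg, hcg]
    simp only [LinearMap.add_apply, LinearMap.smul_apply, smul_eq_mul]
    have hsub : ℓ (u - a0) = ℓ u - ℓ a0 := map_sub ℓ u a0
    nlinarith [this]
  refine ⟨{x ∈ P | g x = cg}, t, htpos, Or.inr ⟨g, cg, hull_le g cg hgb, rfl⟩, ?_, ?_, ?_⟩
  · intro x
    constructor
    · rintro ⟨hx, hgx⟩; exact ⟨hx, (hmem x).1 hgx⟩
    · rintro ⟨hx, hgx⟩; exact ⟨hx, (hmem x).2 hgx⟩
  · rintro x ⟨hx, hfx⟩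
    refine ⟨hx, (hmem x).2 ?_⟩
    rw [hvanF x ⟨hx, hfx⟩, hfx]; ring
  · intro hEq
    have hu'P : u' ∈ P := subset_convexHull ℝ _ hu'V
    have hu'F1 : u' ∈ {x ∈ P | g x = cg} := ⟨hu'P, (hmem u').2 hequ'⟩
    rw [← hEq] at hu'F1
    have : f u' = c := hu'F1.2
    have := hvanA u' hu'V this
    linarith

lemma split_case_zero (V : Finset (Fin q → ℝ)) (f ℓ : (Fin q → ℝ) →ₗ[ℝ] ℝ) (c : ℝ) (a0 : Fin q → ℝ)
    (hfV : ∀ u ∈ (V : Set (Fin q → ℝ)), f u ≤ c)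
    (hvanF : ∀ x ∈ {x ∈ convexHull ℝ (V : Set (Fin q → ℝ)) | f x = c}, ℓ (x - a0) = 0)
    (hvanA : ∀ u ∈ V, f u = c → ℓ (u - a0) = 0)
    (hpos : ∃ u ∈ V, 0 < ℓ (u - a0))
    (hnonneg : ∀ u ∈ V, 0 ≤ ℓ (u - a0))
    (hz : ∃ u0 ∈ V, f u0 ≠ c ∧ ℓ (u0 - a0) = 0) :
    SplitGoal V f c := by
  obtain ⟨F1, t, htpos, hF1face, hF1mem, hF1sub, hF1ne⟩ := rot_face V f ℓ c a0 hfV hvanF hvanA hpos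
  set P := convexHull ℝ (V : Set (Fin q → ℝ)) with hP
  set F := {x ∈ P | f x = c} with hF
  set F2 := {x ∈ P | (-ℓ) x = -(ℓ a0)} with hF2
  have hmem2 : ∀ x, x ∈ F2 ↔ x ∈ P ∧ ℓ (x - a0) = 0 := by
    intro x
    rw [hF2]
    simp only [Set.mem_setOf_eq, LinearMap.neg_apply, map_sub]
    constructor
    · rintro ⟨hx, h⟩; exact ⟨hx, by linarith⟩
    · rintro ⟨hx, h⟩; exact ⟨hx, by linarith⟩
  have hF2face : IsFaceOf F2 P := by
    refine Or.inr ⟨-ℓ, -(ℓ a0), hull_le _ _ ?_, rfl⟩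
    intro u hu
    simp only [LinearMap.neg_apply]
    have := hnonneg u hu
    rw [map_sub] at this
    linarith
  have hF2sub : F ⊆ F2 := by
    rintro x hx
    exact (hmem2 x).2 ⟨hx.1, hvanF x hx⟩
  have hF2ne : F ≠ F2 := by
    obtain ⟨u0, hu0V, hu0c, hu0z⟩ := hz
    intro hEq
    have : u0 ∈ F2 := (hmem2 u0).2 ⟨subset_convexHull ℝ _ hu0V, hu0z⟩
    rw [← hEq] at this
    exact hu0c this.2
  refine ⟨F1, F2, hF1face, hF2face, hF1sub, hF2sub, hF1ne, hF2ne, ?_⟩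
  apply subset_antisymm
  · rintro x ⟨hx1, hx2⟩
    obtain ⟨hxP, hz2⟩ := (hmem2 x).1 hx2
    obtain ⟨-, heq1⟩ := (hF1mem x).1 hx1
    rw [hz2] at heq1
    exact ⟨hxP, by linarith⟩
  · intro x hx
    exact ⟨hF1sub hx, hF2sub hx⟩

lemma split_case_mixed (V : Finset (Fin q → ℝ)) (f ℓ : (Fin q → ℝ) →ₗ[ℝ] ℝ) (c : ℝ) (a0 : Fin q → ℝ)
    (hfV : ∀ u ∈ (V : Set (Fin q → ℝ)), f u ≤ c)
    (hvanF : ∀ x ∈ {x ∈ convexHull ℝ (V : Set (Fin q → ℝ)) | f x = c}, ℓ (x - a0) = 0)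
    (hvanA : ∀ u ∈ V, f u = c → ℓ (u - a0) = 0)
    (hpos : ∃ u ∈ V, 0 < ℓ (u - a0))
    (hneg : ∃ u ∈ V, ℓ (u - a0) < 0) :
    SplitGoal V f c := by
  obtain ⟨F1, t, htpos, hF1face, hF1mem, hF1sub, hF1ne⟩ := rot_face V f ℓ c a0 hfV hvanF hvanA hpos
  have hvanF' : ∀ x ∈ {x ∈ convexHull ℝ (V : Set (Fin q → ℝ)) | f x = c}, (-ℓ) (x - a0) = 0 := by
    intro x hx; simp [hvanF x hx]
  have hvanA' : ∀ u ∈ V, f u = c → (-ℓ) (u - a0) = 0 := by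
    intro u hu h; simp [hvanA u hu h]
  have hpos' : ∃ u ∈ V, 0 < (-ℓ) (u - a0) := by
    obtain ⟨u, hu, h⟩ := hneg; exact ⟨u, hu, by simp only [LinearMap.neg_apply]; linarith⟩
  obtain ⟨F2, s, hspos, hF2face, hF2mem, hF2sub, hF2ne⟩ :=
    rot_face V f (-ℓ) c a0 hfV hvanF' hvanA' hpos'
  refine ⟨F1, F2, hF1face, hF2face, hF1sub, hF2sub, hF1ne, hF2ne, ?_⟩
  apply subset_antisymm
  · rintro x ⟨hx1, hx2⟩
    obtain ⟨hxP, heq1⟩ := (hF1mem x).1 hx1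
    obtain ⟨-, heq2⟩ := (hF2mem x).1 hx2
    simp only [LinearMap.neg_apply] at heq2
    refine ⟨hxP, ?_⟩
    nlinarith [heq1, heq2]
  · intro x hx
    exact ⟨hF1sub hx, hF2sub hx⟩

open Classical in
lemma split_main (V : Finset (Fin q → ℝ)) (f : (Fin q → ℝ) →ₗ[ℝ] ℝ) (c : ℝ)
    (hfV : ∀ u ∈ (V : Set (Fin q → ℝ)), f u ≤ c)
    (hFne : {x ∈ convexHull ℝ (V : Set (Fin q → ℝ)) | f x = c}.Nonempty)
    (hcodim : pdim {x ∈ convexHull ℝ (V : Set (Fin q → ℝ)) | f x = c} + 2 ≤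
      pdim (convexHull ℝ (V : Set (Fin q → ℝ)))) :
    SplitGoal V f c := by
  set P := convexHull ℝ (V : Set (Fin q → ℝ)) with hP
  set F := {x ∈ P | f x = c} with hF
  set A := V.filter (fun u => f u = c) with hA
  have hFA : F = convexHull ℝ (A : Set (Fin q → ℝ)) := face_hull V f c (fun u hu => hfV u hu)
  have hAne : A.Nonempty := by
    rcases hFne with ⟨x, hx⟩
    rw [hFA] at hx
    by_contra h
    rw [Finset.not_nonempty_iff_eq_empty] at h
    rw [h] at hx
    simp at hx
  obtain ⟨a0, ha0A⟩ := hAne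
  have ha0V : a0 ∈ V := (Finset.mem_filter.1 ha0A).1
  set DA := vectorSpan ℝ (A : Set (Fin q → ℝ)) with hDA
  set DV := vectorSpan ℝ (V : Set (Fin q → ℝ)) with hDV
  have hle : DA ≤ DV := vectorSpan_mono ℝ (by exact_mod_cast Finset.filter_subset _ _)
  have hrk : Module.finrank ℝ DA + 2 ≤ Module.finrank ℝ DV := by
    have h1 : pdim F = Module.finrank ℝ DA := by rw [hFA]; rw [pdim_convexHull]; rfl
    have h2 : pdim P = Module.finrank ℝ DV := by rw [hP]; rw [pdim_convexHull]; rfl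
    rw [h1, h2] at hcodim
    exact hcodim
  obtain ⟨ℓ0, ℓ1, hv0, hv1, hNZ⟩ := funcs DA DV hle hrk
  have hsubA : ∀ u ∈ A, u - a0 ∈ DA := by
    intro u hu
    have := vsub_mem_vectorSpan ℝ (Finset.mem_coe.2 hu) (Finset.mem_coe.2 ha0A)
    rwa [vsub_eq_sub] at this
  have hsubF : ∀ x ∈ F, x - a0 ∈ DA := by
    intro x hx
    rw [hFA] at hx
    have hx' : x ∈ affineSpan ℝ (A : Set (Fin q → ℝ)) := convexHull_subset_affineSpan _ hx
    have ha0' : a0 ∈ affineSpan ℝ (A : Set (Fin q → ℝ)) :=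
      subset_affineSpan ℝ _ (Finset.mem_coe.2 ha0A)
    have := AffineSubspace.vsub_mem_direction hx' ha0'
    rwa [direction_affineSpan, vsub_eq_sub] at this
  have hNZ' : ∀ α β : ℝ, (α ≠ 0 ∨ β ≠ 0) →
      ∃ u ∈ V, α * ℓ0 (u - a0) + β * ℓ1 (u - a0) ≠ 0 := by
    intro α β hab
    by_contra h
    push_neg at h
    obtain ⟨x, hxDV, hx⟩ := hNZ α β hab
    apply hx
    have hker : DV ≤ LinearMap.ker (α • ℓ0 + β • ℓ1) := by
      rw [hDV, vectorSpan_eq_span_vsub_set_right ℝ (Finset.mem_coe.2 ha0V), Submodule.span_le]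
      rintro y ⟨u, hu, rfl⟩
      simp only [SetLike.mem_coe, LinearMap.mem_ker, LinearMap.add_apply, LinearMap.smul_apply,
        smul_eq_mul, vsub_eq_sub]
      exact h u hu
    have := hker hxDV
    simpa using this
  have trycase : ∀ ℓ : (Fin q → ℝ) →ₗ[ℝ] ℝ, (∀ y ∈ DA, ℓ y = 0) →
      (∃ u ∈ V, ℓ (u - a0) ≠ 0) →
      SplitGoal V f c ∨ ∃ s : ℝ, s ≠ 0 ∧ ∀ u ∈ V, f u ≠ c → 0 < s * ℓ (u - a0) := by
    intro ℓ hvan hne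
    have hvanA : ∀ u ∈ V, f u = c → ℓ (u - a0) = 0 := fun u hu h =>
      hvan _ (hsubA u (Finset.mem_filter.2 ⟨hu, h⟩))
    have hvanF : ∀ x ∈ F, ℓ (x - a0) = 0 := fun x hx => hvan _ (hsubF x hx)
    by_cases hpos : ∃ u ∈ V, 0 < ℓ (u - a0)
    · by_cases hneg : ∃ u ∈ V, ℓ (u - a0) < 0
      · exact Or.inl (split_case_mixed V f ℓ c a0 hfV hvanF hvanA hpos hneg)
      · push_neg at hneg
        by_cases hzz : ∃ u0 ∈ V, f u0 ≠ c ∧ ℓ (u0 - a0) = 0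
        · exact Or.inl (split_case_zero V f ℓ c a0 hfV hvanF hvanA hpos hneg hzz)
        · push_neg at hzz
          refine Or.inr ⟨1, one_ne_zero, ?_⟩
          intro u hu hc
          rw [one_mul]
          exact lt_of_le_of_ne (hneg u hu) (Ne.symm (hzz u hu hc))
    · push_neg at hpos
      have hvanF' : ∀ x ∈ F, (-ℓ) (x - a0) = 0 := by
        intro x hx; simp [hvanF x hx]
      have hvanA' : ∀ u ∈ V, f u = c → (-ℓ) (u - a0) = 0 := by
        intro u hu h; simp [hvanA u hu h]
      have hpos' : ∃ u ∈ V, 0 < (-ℓ) (u - a0) := by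
        obtain ⟨u, hu, h⟩ := hne
        refine ⟨u, hu, ?_⟩
        simp only [LinearMap.neg_apply]
        have := hpos u hu
        cases lt_or_eq_of_le this with
        | inl h' => linarith
        | inr h' => exact absurd h' h
      have hnonneg' : ∀ u ∈ V, 0 ≤ (-ℓ) (u - a0) := by
        intro u hu
        simp only [LinearMap.neg_apply]
        linarith [hpos u hu]
      by_cases hzz : ∃ u0 ∈ V, f u0 ≠ c ∧ (-ℓ) (u0 - a0) = 0
      · exact Or.inl (split_case_zero V f (-ℓ) c a0 hfV hvanF' hvanA' hpos' hnonneg' hzz)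
      · push_neg at hzz
        refine Or.inr ⟨-1, by norm_num, ?_⟩
        intro u hu hc
        have h1 := hpos u hu
        have h2 := hzz u hu hc
        simp only [LinearMap.neg_apply] at h2
        have : ℓ (u - a0) ≠ 0 := fun h => h2 (by rw [h, neg_zero])
        have : ℓ (u - a0) < 0 := lt_of_le_of_ne h1 this
        nlinarith
  have hne0 : ∃ u ∈ V, ℓ0 (u - a0) ≠ 0 := by
    obtain ⟨u, hu, h⟩ := hNZ' 1 0 (Or.inl one_ne_zero)
    exact ⟨u, hu, by intro h'; apply h; rw [h']; ring⟩
  have hne1 : ∃ u ∈ V, ℓ1 (u - a0) ≠ 0 := by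
    obtain ⟨u, hu, h⟩ := hNZ' 0 1 (Or.inr one_ne_zero)
    exact ⟨u, hu, by intro h'; apply h; rw [h']; ring⟩
  rcases trycase ℓ0 hv0 hne0 with hdone | ⟨s0, hs0, hbad0⟩
  · exact hdone
  rcases trycase ℓ1 hv1 hne1 with hdone | ⟨s1, hs1, hbad1⟩
  · exact hdone
  -- both bad: combine
  set Vc := V.filter (fun u => f u ≠ c) with hVc
  have hVcne : Vc.Nonempty := by
    obtain ⟨u, hu, h⟩ := hne0
    refine ⟨u, Finset.mem_filter.2 ⟨hu, ?_⟩⟩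
    intro hc
    exact h (hv0 _ (hsubA u (Finset.mem_filter.2 ⟨hu, hc⟩)))
  set lam := Vc.inf' hVcne (fun u => (s0 * ℓ0 (u - a0)) / (s1 * ℓ1 (u - a0))) with hlam
  have hlampos : 0 < lam := by
    rw [hlam, Finset.lt_inf'_iff]
    intro u hu
    obtain ⟨huV, hc⟩ := Finset.mem_filter.1 hu
    exact div_pos (hbad0 u huV hc) (hbad1 u huV hc)
  set ℓ : (Fin q → ℝ) →ₗ[ℝ] ℝ := (s0 : ℝ) • ℓ0 - (lam * s1) • ℓ1 with hℓ
  have hval : ∀ x, ℓ x = s0 * ℓ0 x - lam * (s1 * ℓ1 x) := by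
    intro x
    rw [hℓ]
    simp only [LinearMap.sub_apply, LinearMap.smul_apply, smul_eq_mul]
    ring
  have hvanℓ : ∀ y ∈ DA, ℓ y = 0 := by
    intro y hy
    rw [hval, hv0 y hy, hv1 y hy]
    ring
  have hvanAℓ : ∀ u ∈ V, f u = c → ℓ (u - a0) = 0 := fun u hu h =>
    hvanℓ _ (hsubA u (Finset.mem_filter.2 ⟨hu, h⟩))
  have hvanFℓ : ∀ x ∈ F, ℓ (x - a0) = 0 := fun x hx => hvanℓ _ (hsubF x hx)
  have hnonneg : ∀ u ∈ V, 0 ≤ ℓ (u - a0) := by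
    intro u hu
    rw [hval]
    by_cases hc : f u = c
    · have h0 := hvanAℓ u hu hc
      rw [hval] at h0
      linarith
    · have hp0 := hbad0 u hu hc
      have hp1 := hbad1 u hu hc
      have hinf : lam ≤ (s0 * ℓ0 (u - a0)) / (s1 * ℓ1 (u - a0)) :=
        Finset.inf'_le _ (Finset.mem_filter.2 ⟨hu, hc⟩)
      have := (le_div_iff₀ hp1).1 hinf
      linarith
  have hzz : ∃ u0 ∈ V, f u0 ≠ c ∧ ℓ (u0 - a0) = 0 := by
    obtain ⟨u0, hu0, hequ0⟩ := Finset.exists_mem_eq_inf' hVcne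
      (fun u => (s0 * ℓ0 (u - a0)) / (s1 * ℓ1 (u - a0)))
    obtain ⟨hu0V, hc0⟩ := Finset.mem_filter.1 hu0
    refine ⟨u0, hu0V, hc0, ?_⟩
    rw [← hlam] at hequ0
    rw [hval, hequ0]
    rw [div_mul_eq_mul_div, mul_div_assoc, div_self (ne_of_gt (hbad1 u0 hu0V hc0))]
    ring
  have hneℓ : ∃ u ∈ V, ℓ (u - a0) ≠ 0 := by
    obtain ⟨u, hu, h⟩ := hNZ' s0 (-(lam * s1)) (Or.inl hs0)
    refine ⟨u, hu, ?_⟩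
    intro h'
    apply h
    rw [hval] at h'
    linarith
  have hposℓ : ∃ u ∈ V, 0 < ℓ (u - a0) := by
    obtain ⟨u, hu, h⟩ := hneℓ
    exact ⟨u, hu, lt_of_le_of_ne (hnonneg u hu) (Ne.symm h)⟩
  exact split_case_zero V f ℓ c a0 hfV hvanFℓ hvanAℓ hposℓ hnonneg hzz


/-- Intersection of a list of sets, based at `P`. -/
def interL (P : Set (Fin q → ℝ)) : List (Set (Fin q → ℝ)) → Set (Fin q → ℝ)
  | [] => P
  | G :: L => G ∩ interL P L

lemma mem_interL (P : Set (Fin q → ℝ)) (L : List (Set (Fin q → ℝ))) (x : Fin q → ℝ) :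
    x ∈ interL P L ↔ x ∈ P ∧ ∀ G ∈ L, x ∈ G := by
  induction L with
  | nil => simp [interL]
  | cons G L ih =>
    simp only [interL, Set.mem_inter_iff, ih, List.mem_cons]
    constructor
    · rintro ⟨h1, h2, h3⟩
      exact ⟨h2, fun H hH => by rcases hH with rfl | hH; exacts [h1, h3 H hH]⟩
    · rintro ⟨h1, h2⟩
      exact ⟨h2 G (Or.inl rfl), h1, fun H hH => h2 H (Or.inr hH)⟩

lemma interL_face (P : Set (Fin q → ℝ)) (L : List (Set (Fin q → ℝ)))
    (h : ∀ G ∈ L, IsFaceOf G P) : IsFaceOf (interL P L) P := by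
  induction L with
  | nil => exact faceRefl P
  | cons G L ih =>
    exact faceInter (h G List.mem_cons_self) (ih fun H hH => h H (List.mem_cons_of_mem _ hH))

/-- Pruning: from any representation of a face as an intersection of faces, get one whose
length is at most the codimension. -/
lemma prune (P : Set (Fin q → ℝ)) :
    ∀ L : List (Set (Fin q → ℝ)), (∀ G ∈ L, IsFaceOf G P) → (interL P L).Nonempty →
    ∃ L' : List (Set (Fin q → ℝ)), (∀ G ∈ L', G ∈ L) ∧ interL P L' = interL P L ∧
      pdim (interL P L) + L'.length ≤ pdim P := by
  intro L
  induction L with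
  | nil =>
    intro _ _
    exact ⟨[], by simp, rfl, by simp [interL]⟩
  | cons G L ih =>
    intro hfaces hne
    have hGface : IsFaceOf G P := hfaces G List.mem_cons_self
    have hLfaces : ∀ H ∈ L, IsFaceOf H P := fun H hH => hfaces H (List.mem_cons_of_mem _ hH)
    have hsub : interL P (G :: L) ⊆ interL P L := by
      intro x hx
      obtain ⟨hxP, hall⟩ := (mem_interL P (G :: L) x).1 hx
      exact (mem_interL P L x).2 ⟨hxP, fun H hH => hall H (List.mem_cons_of_mem _ hH)⟩
    have hneL : (interL P L).Nonempty := hne.mono hsub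
    obtain ⟨L', hL'mem, hL'eq, hL'len⟩ := ih hLfaces hneL
    by_cases heq : interL P (G :: L) = interL P L
    · refine ⟨L', fun H hH => List.mem_cons_of_mem _ (hL'mem H hH), by rw [hL'eq, heq], ?_⟩
      rw [heq]
      exact hL'len
    · refine ⟨G :: L', fun H hH => ?_, ?_, ?_⟩
      · rcases List.mem_cons.1 hH with rfl | hH
        · exact List.mem_cons_self
        · exact List.mem_cons_of_mem _ (hL'mem H hH)
      · show G ∩ interL P L' = interL P (G :: L)
        rw [hL'eq]; rfl
      · have hlt : pdim (interL P (G :: L)) < pdim (interL P L) := by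
          apply pdim_lt_of_face_ssubset (interL_face P _ hfaces) (interL_face P _ hLfaces)
            hsub hne heq
        simp only [List.length_cons]
        omega

/-- Every nonempty proper face of a polytope is a finite intersection of facets. -/
lemma exists_facets (V : Finset (Fin q → ℝ)) :
    ∀ cd : ℕ, ∀ F : Set (Fin q → ℝ),
      IsFaceOf F (convexHull ℝ (V : Set (Fin q → ℝ))) → F.Nonempty →
      F ≠ convexHull ℝ (V : Set (Fin q → ℝ)) →
      pdim (convexHull ℝ (V : Set (Fin q → ℝ))) ≤ pdim F + cd →
      ∃ L : List (Set (Fin q → ℝ)),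
        (∀ G ∈ L, IsFacetOf G (convexHull ℝ (V : Set (Fin q → ℝ)))) ∧
        interL (convexHull ℝ (V : Set (Fin q → ℝ))) L = F := by
  intro cd
  induction cd with
  | zero =>
    intro F hface hne hprop hcd
    have := pdim_lt_of_face_ssubset hface (faceRefl _) (faceSubset hface) hne hprop
    omega
  | succ cd ih =>
    intro F hface hne hprop hcd
    set P := convexHull ℝ (V : Set (Fin q → ℝ)) with hP
    have hlt : pdim F < pdim P :=
      pdim_lt_of_face_ssubset hface (faceRefl _) (faceSubset hface) hne hprop
    by_cases h1 : pdim F + 1 = pdim P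
    · refine ⟨[F], ?_, ?_⟩
      · intro G hG
        rw [List.mem_singleton] at hG
        subst hG
        exact ⟨hface, hne, hprop, h1⟩
      · show F ∩ P = F
        exact Set.inter_eq_left.2 (faceSubset hface)
    · -- codim ≥ 2 : split
      obtain ⟨f, c, hfb, hFdef⟩ := hface.resolve_left hprop
      have h2 : pdim F + 2 ≤ pdim P := by omega
      have hsplit := split_main V f c (fun u hu => hfb u (subset_convexHull ℝ _ hu))
        (by rw [← hFdef]; exact hne) (by rw [← hFdef]; exact h2)
      obtain ⟨F1, F2, hF1face, hF2face, hF1sub, hF2sub, hF1ne, hF2ne, hFinter⟩ := hsplit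
      rw [← hFdef] at hF1sub hF2sub hF1ne hF2ne hFinter
      have hF1neP : F1 ≠ P := by
        intro h
        apply hF2ne
        rw [← hFinter, h, Set.inter_eq_right.2 (faceSubset hF2face)]
      have hF2neP : F2 ≠ P := by
        intro h
        apply hF1ne
        rw [← hFinter, h, Set.inter_eq_left.2 (faceSubset hF1face)]
      have hF1lt : pdim F < pdim F1 :=
        pdim_lt_of_face_ssubset (Or.inr ⟨f, c, hfb, hFdef⟩) hF1face hF1sub hne hF1ne
      have hF2lt : pdim F < pdim F2 :=
        pdim_lt_of_face_ssubset (Or.inr ⟨f, c, hfb, hFdef⟩) hF2face hF2sub hne hF2ne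
      obtain ⟨L1, hL1facet, hL1⟩ := ih F1 hF1face (hne.mono hF1sub) hF1neP (by omega)
      obtain ⟨L2, hL2facet, hL2⟩ := ih F2 hF2face (hne.mono hF2sub) hF2neP (by omega)
      refine ⟨L1 ++ L2, ?_, ?_⟩
      · intro G hG
        rcases List.mem_append.1 hG with h | h
        exacts [hL1facet G h, hL2facet G h]
      · ext x
        rw [mem_interL, ← hFinter]
        constructor
        · rintro ⟨hxP, hall⟩
          constructor
          · rw [← hL1, mem_interL]
            exact ⟨hxP, fun G hG => hall G (List.mem_append.2 (Or.inl hG))⟩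
          · rw [← hL2, mem_interL]
            exact ⟨hxP, fun G hG => hall G (List.mem_append.2 (Or.inr hG))⟩
        · rintro ⟨hx1, hx2⟩
          rw [← hL1, mem_interL] at hx1
          rw [← hL2, mem_interL] at hx2
          refine ⟨hx1.1, fun G hG => ?_⟩
          rcases List.mem_append.1 hG with h | h
          exacts [hx1.2 G h, hx2.2 G h]

end SpecialAux

open SpecialAux in
/-- Lemma 3.4 of Athanasiadis: if `v 0, …, v (n-1)` are the vertices of a special simplex
in the `m`-dimensional polytope `P` (each facet of `P` contains exactly `n-1` of them) and
`F` is a face of codimension `k`, `1 ≤ k ≤ n-1`, containing none of `v 0, …, v (k-1)`,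
then `F` contains `v i` for all `k ≤ i ≤ n-1`. -/
theorem special_simplex_codim_face {q m n : ℕ} (V : Finset (Fin q → ℝ))
    (P : Set (Fin q → ℝ)) (hP : P = convexHull ℝ (V : Set (Fin q → ℝ)))
    (hdim : pdim P = m) (v : Fin n → (Fin q → ℝ))
    (hvert : ∀ i, v i ∈ Set.extremePoints ℝ P) (hinj : Function.Injective v)
    (hspecial : ∀ F, IsFacetOf F P → Nat.card {i : Fin n // v i ∈ F} = n - 1)
    (F : Set (Fin q → ℝ)) (hF : IsFaceOf F P) (hFne : F.Nonempty)
    (k : ℕ) (hk1 : 1 ≤ k) (hkn : k ≤ n - 1) (hcodim : pdim F + k = m)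
    (hmiss : ∀ i : Fin n, (i : ℕ) < k → v i ∉ F) :
    ∀ i : Fin n, k ≤ (i : ℕ) → v i ∈ F := by
  classical
  intro i hi
  have hn2 : 2 ≤ n := by
    rcases n with _ | _ | n <;> omega
  have hkn' : k < n := by omega
  subst hP
  have hFP : F ≠ convexHull ℝ (V : Set (Fin q → ℝ)) := by
    intro h
    rw [h] at hcodim
    omega
  obtain ⟨L, hLfacet, hLeq⟩ := exists_facets V k F hF hFne hFP (by omega)
  obtain ⟨L', hL'mem, hL'eq, hL'len⟩ := prune _ L (fun G hG => (hLfacet G hG).1)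
    (by rw [hLeq]; exact hFne)
  rw [hLeq] at hL'eq hL'len
  have hL'facet : ∀ G ∈ L', IsFacetOf G (convexHull ℝ (V : Set (Fin q → ℝ))) :=
    fun G hG => hLfacet G (hL'mem G hG)
  have hlen : L'.length ≤ k := by omega
  -- each facet misses exactly one vertex index
  have hmiss1 : ∀ G, IsFacetOf G (convexHull ℝ (V : Set (Fin q → ℝ))) →
      ∃ a : Fin n, ∀ b : Fin n, v b ∉ G → b = a := by
    intro G hG
    have hc := hspecial G hG
    rw [Nat.card_eq_fintype_card] at hc
    have hcard : Fintype.card {j : Fin n // v j ∉ G} = 1 := by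
      have h2 := Fintype.card_subtype_compl (fun j : Fin n => v j ∈ G)
      rw [hc, Fintype.card_fin] at h2
      rw [h2]
      omega
    obtain ⟨⟨a, ha⟩, huniq⟩ := Fintype.card_eq_one_iff.1 hcard
    exact ⟨a, fun b hb => congrArg Subtype.val (huniq ⟨b, hb⟩)⟩
  -- the injection from {0,...,k-1} into the facets of L'
  have hvP : ∀ j : Fin n, v j ∈ convexHull ℝ (V : Set (Fin q → ℝ)) := fun j =>
    extremePoints_subset (hvert j)
  set emb : Fin k → Fin n := fun j => ⟨j.1, lt_trans j.2 hkn'⟩ with hemb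
  have hchoice : ∀ j : Fin k, ∃ G, G ∈ L' ∧ v (emb j) ∉ G := by
    intro j
    have hnotF : v (emb j) ∉ F := hmiss (emb j) j.2
    by_contra h
    push_neg at h
    exact hnotF (by rw [← hL'eq]; exact (mem_interL _ L' _).2 ⟨hvP _, h⟩)
  set φ : Fin k → Set (Fin q → ℝ) := fun j => Classical.choose (hchoice j) with hφ
  have hφmem : ∀ j, φ j ∈ L' := fun j => (Classical.choose_spec (hchoice j)).1
  have hφmiss : ∀ j, v (emb j) ∉ φ j := fun j => (Classical.choose_spec (hchoice j)).2
  have hφinj : Function.Injective φ := by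
    intro j j' hjj'
    obtain ⟨a, ha⟩ := hmiss1 (φ j) (hL'facet _ (hφmem j))
    have h1 := ha (emb j) (hφmiss j)
    have h2 := ha (emb j') (by rw [hjj']; exact hφmiss j')
    have heq : emb j = emb j' := h1.trans h2.symm
    have : (emb j).1 = (emb j').1 := congrArg Fin.val heq
    exact Fin.ext this
  set T : Finset (Set (Fin q → ℝ)) := L'.toFinset with hT
  have himgsub : ∀ j : Fin k, φ j ∈ T := fun j => List.mem_toFinset.2 (hφmem j)
  have hcardk : k ≤ T.card := by
    have := Finset.card_le_card_of_injOn (s := (Finset.univ : Finset (Fin k))) (t := T) φ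
      (fun j _ => himgsub j) (fun a _ b _ h => hφinj h)
    simpa using this
  have hTlen : T.card ≤ L'.length := L'.toFinset_card_le
  have hTk : T.card = k := le_antisymm (le_trans hTlen hlen) hcardk
  have himg : Finset.image φ Finset.univ = T := by
    apply Finset.eq_of_subset_of_card_le
    · intro G hG
      obtain ⟨j, _, rfl⟩ := Finset.mem_image.1 hG
      exact himgsub j
    · rw [Finset.card_image_of_injective _ hφinj, Finset.card_univ, Fintype.card_fin, hTk]
  -- conclude
  rw [← hL'eq]
  refine (mem_interL _ L' _).2 ⟨hvP i, fun G hG => ?_⟩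
  by_contra hvi
  have hGT : G ∈ T := List.mem_toFinset.2 hG
  rw [← himg] at hGT
  obtain ⟨j, _, rfl⟩ := Finset.mem_image.1 hGT
  obtain ⟨a, ha⟩ := hmiss1 (φ j) (hL'facet _ (hφmem j))
  have h1 := ha (emb j) (hφmiss j)
  have h2 := ha i hvi
  have : (emb j : Fin n) = i := h1.trans h2.symm
  have : (j : ℕ) = (i : ℕ) := congrArg Fin.val this
  omega
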